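/- Weighted summation-by-parts inequality: ∑_{k=0}^∞ (γ_k − γ_{k+1}) ∑_{j∈ℤ} ρ_{j+k} |V(W_{j+k+1}) − V(W_j)| ≤ ∑_{j∈ℤ} W_j |V(W_{j+1}) − V(W_j)|, where all sums of nonnegative terms are valued in [0,∞]. -/

import Mathlib

open scoped ENNReal


lemma tail_sum_aux (γ : ℕ → ℝ) (hγmono : ∀ k, γ (k+1) ≤ γ k)
    (hγsum : Summable γ) (l : ℕ) :
    ∑' k : ℕ, ENNReal.ofReal (γ (l + k) - γ (l + k + 1)) = ENNReal.ofReal (γ l) := by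
  have hps : ∀ N, ∑ k ∈ Finset.range N, ENNReal.ofReal (γ (l + k) - γ (l + k + 1))
      = ENNReal.ofReal (γ l - γ (l + N)) := by
    intro N
    rw [← ENNReal.ofReal_sum_of_nonneg (fun i _ => sub_nonneg.2 (hγmono _))]
    congr 1
    have := Finset.sum_range_sub' (fun n => γ (l + n)) N
    simpa [add_assoc] using this
  have h0 : Filter.Tendsto (fun N => γ (l + N)) Filter.atTop (nhds 0) :=
    (hγsum.tendsto_atTop_zero).comp
      (Filter.tendsto_atTop_mono (fun N => Nat.le_add_left N l) Filter.tendsto_id)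
  have h1 : Filter.Tendsto (fun N => ENNReal.ofReal (γ l - γ (l + N))) Filter.atTop
      (nhds (ENNReal.ofReal (γ l))) := by
    have : Filter.Tendsto (fun N => γ l - γ (l + N)) Filter.atTop (nhds (γ l - 0)) :=
      tendsto_const_nhds.sub h0
    rw [sub_zero] at this
    exact (ENNReal.continuous_ofReal.tendsto _).comp this
  have h2 := ENNReal.tendsto_nat_tsum (fun k => ENNReal.ofReal (γ (l + k) - γ (l + k + 1)))
  simp only [hps] at h2
  exact tendsto_nhds_unique h2 h1

lemma telescope_aux (g : ℤ → ℝ) (j : ℤ) (k : ℕ) :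
    |g (j + (k:ℤ) + 1) - g j| ≤ ∑ i ∈ Finset.range (k+1), |g (j + (i:ℤ) + 1) - g (j + (i:ℤ))| := by
  induction k with
  | zero => simp
  | succ k ih =>
    rw [Finset.sum_range_succ]
    have h2 : j + ((k+1 : ℕ):ℤ) = j + (k:ℤ) + 1 := by push_cast; ring
    have h3 : j + ((k+1 : ℕ):ℤ) + 1 = j + (k:ℤ) + 1 + 1 := by push_cast; ring
    have htri := abs_sub_le (g (j + (k:ℤ) + 1 + 1)) (g (j + (k:ℤ) + 1)) (g j)
    rw [h2]
    linarith

/-- Weighted summation-by-parts inequality: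
`∑_k (γ_k − γ_{k+1}) ∑_j ρ_{j+k} |V(W_{j+k+1}) − V(W_j)| ≤ ∑_j W_j |V(W_{j+1}) − V(W_j)|`,
with all sums of nonnegative terms taken in `[0,∞]`. -/
theorem weighted_summation_by_parts_inequality
    (γ : ℕ → ℝ) (hγnn : ∀ k, 0 ≤ γ k) (hγmono : ∀ k, γ (k+1) ≤ γ k)
    (hγsum : HasSum γ 1)
    (ρ : ℤ → ℝ) (hρ : ∀ j, ρ j ∈ Set.Icc (0:ℝ) 1)
    (W : ℤ → ℝ) (hW : ∀ j : ℤ, W j = ∑' k : ℕ, γ k * ρ (j + (k:ℤ)))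
    (V : ℝ → ℝ) (L : ℝ) (hL : 0 ≤ L)
    (hVlip : ∀ x y : ℝ, |V x - V y| ≤ L * |x - y|) :
    ∑' k : ℕ, ENNReal.ofReal (γ k - γ (k+1)) *
        ∑' j : ℤ, ENNReal.ofReal (ρ (j + (k:ℤ)) * |V (W (j + (k:ℤ) + 1)) - V (W j)|) ≤
    ∑' j : ℤ, ENNReal.ofReal (W j * |V (W (j+1)) - V (W j)|) := by
  have hρ0 : ∀ j, 0 ≤ ρ j := fun j => (hρ j).1
  have hρ1 : ∀ j, ρ j ≤ 1 := fun j => (hρ j).2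
  have hWnn : ∀ j, 0 ≤ W j := fun j => by
    rw [hW j]; exact tsum_nonneg (fun k => mul_nonneg (hγnn k) (hρ0 _))
  set D : ℤ → ℝ≥0∞ := fun m => ENNReal.ofReal |V (W (m+1)) - V (W m)| with hD
  set r : ℤ → ℝ≥0∞ := fun j => ENNReal.ofReal (ρ j) with hr
  set S : ℕ → ℝ≥0∞ := fun l => ∑' m : ℤ, r (m + (l:ℤ)) * D m with hS
  -- Step 1: for each k, the inner sum is bounded by ∑_{l ≤ k} S l
  have step1 : ∀ k : ℕ,
      (∑' j : ℤ, ENNReal.ofReal (ρ (j + (k:ℤ)) * |V (W (j + (k:ℤ) + 1)) - V (W j)|)) ≤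
      ∑ l ∈ Finset.range (k+1), S l := by
    intro k
    have h1 : ∀ j : ℤ, ENNReal.ofReal (ρ (j + (k:ℤ)) * |V (W (j + (k:ℤ) + 1)) - V (W j)|) ≤
        ∑ i ∈ Finset.range (k+1), r (j + (k:ℤ)) * D (j + (i:ℤ)) := by
      intro j
      rw [ENNReal.ofReal_mul (hρ0 _)]
      calc ENNReal.ofReal (ρ (j + (k:ℤ))) * ENNReal.ofReal |V (W (j + (k:ℤ) + 1)) - V (W j)|
          ≤ ENNReal.ofReal (ρ (j + (k:ℤ))) *
            ENNReal.ofReal (∑ i ∈ Finset.range (k+1),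
              |V (W (j + (i:ℤ) + 1)) - V (W (j + (i:ℤ)))|) :=
            mul_le_mul_right (ENNReal.ofReal_le_ofReal (telescope_aux (fun m => V (W m)) j k)) _
        _ = ∑ i ∈ Finset.range (k+1), r (j + (k:ℤ)) * D (j + (i:ℤ)) := by
            rw [ENNReal.ofReal_sum_of_nonneg (fun i _ => abs_nonneg _), Finset.mul_sum]
    calc (∑' j : ℤ, ENNReal.ofReal (ρ (j + (k:ℤ)) * |V (W (j + (k:ℤ) + 1)) - V (W j)|))
        ≤ ∑' j : ℤ, ∑ i ∈ Finset.range (k+1), r (j + (k:ℤ)) * D (j + (i:ℤ)) :=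
          ENNReal.tsum_le_tsum h1
      _ = ∑ i ∈ Finset.range (k+1), ∑' j : ℤ, r (j + (k:ℤ)) * D (j + (i:ℤ)) :=
          Summable.tsum_finsetSum (fun i _ => ENNReal.summable)
      _ = ∑ i ∈ Finset.range (k+1), S (k - i) := by
          apply Finset.sum_congr rfl
          intro i hi
          have hik : i ≤ k := Nat.lt_succ_iff.mp (Finset.mem_range.mp hi)
          rw [hS]
          rw [← (Equiv.subRight (i:ℤ)).tsum_eq (fun j => r (j + (k:ℤ)) * D (j + (i:ℤ)))]
          apply tsum_congr
          intro m
          have e1 : m - (i:ℤ) + (k:ℤ) = m + ((k - i : ℕ) : ℤ) := by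
            push_cast [Nat.cast_sub hik]; ring
          have e2 : m - (i:ℤ) + (i:ℤ) = m := by ring
          simp only [Equiv.subRight_apply]
          rw [e1, e2]
      _ = ∑ l ∈ Finset.range (k+1), S l := by
          have := Finset.sum_range_reflect S (k+1)
          simpa using this
  -- tail sums with indicators
  have tailS : ∀ l : ℕ, (∑' k : ℕ, if l ≤ k then ENNReal.ofReal (γ k - γ (k+1)) else 0)
      = ENNReal.ofReal (γ l) := by
    intro l
    have hinj : Function.Injective (fun n : ℕ => l + n) := fun a b h => by simpa using h
    have hsupp : Function.support (fun k : ℕ => if l ≤ k then ENNReal.ofReal (γ k - γ (k+1)) else 0)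
        ⊆ Set.range (fun n : ℕ => l + n) := by
      intro x hx
      by_contra h
      have hnle : ¬ l ≤ x := by
        intro hle; exact h ⟨x - l, by show l + (x - l) = x; omega⟩
      simp [hnle] at hx
    rw [← hinj.tsum_eq hsupp]
    calc (∑' n : ℕ, if l ≤ l + n then ENNReal.ofReal (γ (l+n) - γ (l+n+1)) else 0)
        = ∑' n : ℕ, ENNReal.ofReal (γ (l+n) - γ (l+n+1)) :=
          tsum_congr fun n => by simp
      _ = ENNReal.ofReal (γ l) := tail_sum_aux γ hγmono hγsum.summable l
  -- ofReal (W m) as a sum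
  have hWm : ∀ m : ℤ, (∑' l : ℕ, ENNReal.ofReal (γ l) * r (m + (l:ℤ))) = ENNReal.ofReal (W m) := by
    intro m
    have hsum : Summable (fun k : ℕ => γ k * ρ (m + (k:ℤ))) := by
      apply Summable.of_nonneg_of_le (fun k => mul_nonneg (hγnn k) (hρ0 _))
        (fun k => ?_) hγsum.summable
      calc γ k * ρ (m + (k:ℤ)) ≤ γ k * 1 := mul_le_mul_of_nonneg_left (hρ1 _) (hγnn k)
        _ = γ k := mul_one _
    rw [hW m, ENNReal.ofReal_tsum_of_nonneg (fun k => mul_nonneg (hγnn k) (hρ0 _)) hsum]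
    exact tsum_congr fun k => by rw [ENNReal.ofReal_mul (hγnn k), hr]
  -- main chain
  calc ∑' k : ℕ, ENNReal.ofReal (γ k - γ (k+1)) *
        ∑' j : ℤ, ENNReal.ofReal (ρ (j + (k:ℤ)) * |V (W (j + (k:ℤ) + 1)) - V (W j)|)
      ≤ ∑' k : ℕ, ENNReal.ofReal (γ k - γ (k+1)) * ∑ l ∈ Finset.range (k+1), S l :=
        ENNReal.tsum_le_tsum (fun k => mul_le_mul_right (step1 k) _)
    _ = ∑' k : ℕ, ∑' l : ℕ, (if l ≤ k then ENNReal.ofReal (γ k - γ (k+1)) * S l else 0) := by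
        apply tsum_congr
        intro k
        have hfin : (∑ l ∈ Finset.range (k+1), S l) = ∑' l : ℕ, (if l ≤ k then S l else 0) := by
          rw [tsum_eq_sum (s := Finset.range (k+1))
            (fun l hl => by simp [Nat.lt_succ_iff, Finset.mem_range] at hl; simp [hl])]
          exact (Finset.sum_congr rfl fun l hl => by
            simp [Nat.lt_succ_iff.mp (Finset.mem_range.mp hl)]).symm
        rw [hfin, ← ENNReal.tsum_mul_left]
        exact tsum_congr fun l => by split <;> simp
    _ = ∑' l : ℕ, ∑' k : ℕ, (if l ≤ k then ENNReal.ofReal (γ k - γ (k+1)) * S l else 0) :=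
        ENNReal.tsum_comm
    _ = ∑' l : ℕ, ENNReal.ofReal (γ l) * S l := by
        apply tsum_congr
        intro l
        have heq : (fun k : ℕ => if l ≤ k then ENNReal.ofReal (γ k - γ (k+1)) * S l else 0)
            = fun k : ℕ => (if l ≤ k then ENNReal.ofReal (γ k - γ (k+1)) else 0) * S l := by
          funext k; split <;> simp
        rw [heq, ENNReal.tsum_mul_right, tailS l]
    _ = ∑' l : ℕ, ∑' m : ℤ, ENNReal.ofReal (γ l) * (r (m + (l:ℤ)) * D m) := by
        exact tsum_congr fun l => by rw [hS, ← ENNReal.tsum_mul_left]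
    _ = ∑' m : ℤ, ∑' l : ℕ, ENNReal.ofReal (γ l) * (r (m + (l:ℤ)) * D m) := ENNReal.tsum_comm
    _ = ∑' m : ℤ, (∑' l : ℕ, ENNReal.ofReal (γ l) * r (m + (l:ℤ))) * D m := by
        apply tsum_congr
        intro m
        rw [← ENNReal.tsum_mul_right]
        exact tsum_congr fun l => (mul_assoc _ _ _).symm
    _ = ∑' m : ℤ, ENNReal.ofReal (W m) * D m := tsum_congr fun m => by rw [hWm m]
    _ = ∑' j : ℤ, ENNReal.ofReal (W j * |V (W (j+1)) - V (W j)|) :=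
        tsum_congr fun j => by rw [ENNReal.ofReal_mul (hWnn j), hD]
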